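/- Let c = Σ_{k≥0} k! x1^k be the Ferfera series. Then for every nonempty word η = x_{i1} ⋯ x_{il} ∈ X*, (S a_η)(−c) = (−1)^{|η|−1} (Θ̂′_η (a_∅))(−c), where Θ̂′_η := θ̂′_{il} ∘ ⋯ ∘ θ̂′_{i1} with θ̂′_1 := −θ̃_1 and θ̂′_0 := κ_∅ ∘ θ̃_1; in particular the value (S a_η)(−c) depends only on coordinate functions of the form a_{x1^n} and a_∅. -/

import Mathlib

open scoped TensorProduct

noncomputable section

namespace Paper

/-- Words over the alphabet `X = {x0, x1}`, encoded as lists over `Fin 2`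
(`0` stands for the letter `x0` and `1` for the letter `x1`). -/
abbrev Word : Type := List (Fin 2)

/-- Formal power series `ℝ⟨⟨X⟩⟩`, given by their coefficient functions `η ↦ ⟨c,η⟩`. -/
abbrev Series : Type := Word → ℝ

/-- The left shift `x_i⁻¹(c)`. -/
def lshift (i : Fin 2) (c : Series) : Series := fun w => c (i :: w)

/-- Left concatenation `x_i c` of the letter `x_i` onto every word of `c`. -/
def lconcat (i : Fin 2) (c : Series) : Series := fun w =>
  match w with
  | [] => 0
  | j :: v => if j = i then c v else 0

/-- Right concatenation `p x_i` of the letter `x_i` onto every word of `p`. -/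
def rconcat {R : Type*} [Zero R] (i : Fin 2) (p : Word → R) : Word → R := fun w =>
  if w.getLast? = some i then p w.dropLast else 0

/-- The series of a single word. -/
def ind (η : Word) : Series := fun w => if w = η then 1 else 0

/-- The empty word as a series, the unit `∅` (often written `1`). -/
def one : Series := ind []

/-- The shuffle product, defined coefficientwise by the recursion
`⟨c ⧢ d, ∅⟩ = ⟨c,∅⟩⟨d,∅⟩` and `⟨c ⧢ d, x_i w⟩ = ⟨x_i⁻¹(c) ⧢ d, w⟩ + ⟨c ⧢ x_i⁻¹(d), w⟩`,
which is the bilinear (and ultrametrically continuous) extension of the recursive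
shuffle product of words. -/
def shuffleFn : Series → Series → Word → ℝ
  | c, d, [] => c [] * d []
  | c, d, i :: w => shuffleFn (lshift i c) d w + shuffleFn c (lshift i d) w

/-- The shuffle product on `ℝ⟨⟨X⟩⟩`. -/
def sh (c d : Series) : Series := shuffleFn c d

/-- The map `φ_d(x_i)` for the modified composition product:
`φ_d(x0)(e) = x0 e` and `φ_d(x1)(e) = x1 e + x0 (d ⧢ e)`. -/
def phiLetter (d : Series) (i : Fin 2) (e : Series) : Series :=
  if i = 0 then lconcat 0 e else lconcat 1 e + lconcat 0 (sh d e)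

/-- `φ_d(η)`, the algebra-homomorphism extension determined by
`φ_d(x_i η) = φ_d(x_i) ∘ φ_d(η)` and `φ_d(∅) = id`. -/
def phi (d : Series) : Word → Series → Series
  | [], e => e
  | i :: η, e => phiLetter d i (phi d η e)

/-- The modified composition product `c ∘̃ d = Σ_η ⟨c,η⟩ φ_d(η)(1)`. -/
def mcomp (c d : Series) : Series := fun w => ∑' η : Word, c η * phi d η one w

/-- The map `ψ_d(x_i)` for the composition product:
`ψ_d(x0)(e) = x0 e` and `ψ_d(x1)(e) = x0 (d ⧢ e)`. -/
def psiLetter (d : Series) (i : Fin 2) (e : Series) : Series :=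
  if i = 0 then lconcat 0 e else lconcat 0 (sh d e)

/-- `ψ_d(η)`, determined by `ψ_d(x_i η) = ψ_d(x_i) ∘ ψ_d(η)` and `ψ_d(∅) = id`. -/
def psi (d : Series) : Word → Series → Series
  | [], e => e
  | i :: η, e => psiLetter d i (psi d η e)

/-- The composition product `c ∘ d = Σ_η ⟨c,η⟩ ψ_d(η)(1)`. -/
def comp (c d : Series) : Series := fun w => ∑' η : Word, c η * psi d η one w

/-- The group operation on `ℝ⟨⟨X_δ⟩⟩ = {δ + c}`, transported to the `c`-parts:
`c_δ ∘ d_δ = δ + (d + c ∘̃ d)`. -/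
def gop (c d : Series) : Series := d + mcomp c d

/-- The Ferfera series `c = Σ_{k ≥ 0} k! x1^k`. -/
def ferfera : Series := fun w =>
  if w = List.replicate w.length (1 : Fin 2) then (Nat.factorial w.length : ℝ) else 0

/-- The degree of a word, `deg(η) = 2|η|_{x0} + |η|_{x1} + 1`. -/
def degW (η : Word) : ℕ := 2 * η.count 0 + η.count 1 + 1

/-- The output feedback Hopf algebra `H`: the free unital commutative `ℝ`-algebra on the
coordinate functions `a_η`, realized as polynomials in commuting variables indexed by words. -/
abbrev H : Type := MvPolynomial Word ℝ

/-- The coordinate function `a_η`. -/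
def aw (η : Word) : H := MvPolynomial.X η

/-- Character (pointwise) evaluation of elements of `H` at a series `c`:
`(a_{η₁} ⋯ a_{η_l})(c) = ⟨c,η₁⟩ ⋯ ⟨c,η_l⟩`, extended as an algebra map. -/
def evalS (c : Series) : H →ₐ[ℝ] ℝ := MvPolynomial.aeval c

/-- Evaluation of `H ⊗ H` at a pair of series: `(p ⊗ q)(c,d) = p(c) q(d)`. -/
def evalPair (c d : Series) : H ⊗[ℝ] H →ₗ[ℝ] ℝ :=
  (LinearMap.mul' ℝ ℝ).comp (TensorProduct.map (evalS c).toLinearMap (evalS d).toLinearMap)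

/-- The counit `ε` of `H`: `ε(a_η) = 0`, `ε(1) = 1`. -/
def counit : H →ₐ[ℝ] ℝ := evalS 0

/-- The defining property of the full coproduct `Δ` of the output feedback Hopf algebra:
`Δ a_η = Δ̃ a_η + 1 ⊗ a_η` where `Δ̃ a_η (c,d) = ⟨c ∘̃ d, η⟩`, i.e.
`(Δ a_η)(c,d) = ⟨c ∘̃ d, η⟩ + ⟨d, η⟩` for all series `c, d`; `Δ` is an algebra morphism. -/
def IsFBCoproduct (Δ : H →ₐ[ℝ] (H ⊗[ℝ] H)) : Prop :=
  ∀ (η : Word) (c d : Series), evalPair c d (Δ (aw η)) = mcomp c d η + d η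

/-- `S` is an antipode for the coproduct `Δ` (with counit `ε`):
`μ ∘ (S ⊗ id) ∘ Δ = 1·ε = μ ∘ (id ⊗ S) ∘ Δ`. -/
def IsAntipode (Δ : H →ₐ[ℝ] (H ⊗[ℝ] H)) (S : H →ₗ[ℝ] H) : Prop :=
  (∀ p : H, LinearMap.mul' ℝ H (TensorProduct.map S LinearMap.id (Δ p)) = counit p • 1) ∧
  (∀ p : H, LinearMap.mul' ℝ H (TensorProduct.map LinearMap.id S (Δ p)) = counit p • 1)

/-- The right-augmentation operator `θ̃_i`, the derivation on `H` with `θ̃_i(a_η) = a_{η x_i}`. -/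
def thetaR (i : Fin 2) : Derivation ℝ H H :=
  MvPolynomial.mkDerivation ℝ fun η => aw (η ++ [i])

/-- The left-augmentation operator `θ_i`, the derivation on `H` with `θ_i(a_η) = a_{x_i η}`. -/
def thetaL (i : Fin 2) : Derivation ℝ H H :=
  MvPolynomial.mkDerivation ℝ fun η => aw (i :: η)

/-- The multiplication operator `κ_∅(h) = h · a_∅`. -/
def kappaE : H →ₗ[ℝ] H := LinearMap.mulRight ℝ (aw [])

/-- The shuffle coefficient `⟨ξ ⧢ ν, η⟩`. -/
def shCoeff (ξ ν η : Word) : ℝ := sh (ind ξ) (ind ν) η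

/-- The finite set of words of length `n`. -/
def wordsLen (n : ℕ) : Finset Word :=
  (Finset.univ : Finset (Fin n → Fin 2)).image List.ofFn

/-- The deshuffle coproduct `Δ_⧢ a_η = Σ_{ξ,ν} ⟨ξ ⧢ ν, η⟩ a_ξ ⊗ a_ν`
(the unique coproduct satisfying `Δ_⧢ a_∅ = a_∅ ⊗ a_∅` and the coderivation recursions
with respect to the augmentation operators). -/
def deshuffle (η : Word) : H ⊗[ℝ] H :=
  ∑ k ∈ Finset.range (η.length + 1), ∑ ξ ∈ wordsLen k, ∑ ν ∈ wordsLen (η.length - k),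
    shCoeff ξ ν η • (aw ξ ⊗ₜ[ℝ] aw ν)

/-- Iterated integrals: `E_∅[u](t) = 1`, `E_{x_i η}[u](t) = ∫₀ᵗ u_i(s) E_η[u](s) ds`. -/
def E (u : Fin 2 → ℝ → ℝ) : Word → ℝ → ℝ
  | [], _ => 1
  | i :: η, t => ∫ s in (0:ℝ)..t, u i s * E u η s

end Paper

namespace Paper

/-- The operator `θ̂′_i` on `H`: `θ̂′_1 := −θ̃_1` and `θ̂′_0 := κ_∅ ∘ θ̃_1`. -/
def thetaHat (i : Fin 2) : H →ₗ[ℝ] H :=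
  if i = 0 then kappaE ∘ₗ (thetaR 1).toLinearMap
  else -(thetaR 1).toLinearMap

/-- `Θ̂′_η := θ̂′_{i_l} ∘ ⋯ ∘ θ̂′_{i_1}` for `η = x_{i_1} ⋯ x_{i_l}`. -/
def thetaHatWord : Word → (H →ₗ[ℝ] H)
  | [] => LinearMap.id
  | i :: η => thetaHatWord η ∘ₗ thetaHat i

end Paper


namespace Paper

/-! ### Basic word weights -/

def wt2 (kap : Fin 2 → ℕ) (w : Word) : ℕ := (w.map kap).sum

@[simp] lemma wt2_nil (kap : Fin 2 → ℕ) : wt2 kap [] = 0 := rfl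
@[simp] lemma wt2_cons (kap : Fin 2 → ℕ) (i : Fin 2) (w : Word) :
    wt2 kap (i :: w) = kap i + wt2 kap w := rfl

lemma wt2_eq_zero {kap : Fin 2 → ℕ} (hk : ∀ i, 0 < kap i) {w : Word}
    (h : wt2 kap w = 0) : w = [] := by
  cases w with
  | nil => rfl
  | cons i v => have := hk i; simp [wt2_cons] at h; omega

/-! ### Shuffle product lemmas -/

lemma shuffleFn_congr : ∀ (w : Word) (c c' e e' : Series),
    (∀ v : Word, v.length ≤ w.length → c v = c' v) →
    (∀ v : Word, v.length ≤ w.length → e v = e' v) →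
    shuffleFn c e w = shuffleFn c' e' w
  | [], c, c', e, e', hc, he => by
      simp only [shuffleFn]; rw [hc [] (by simp), he [] (by simp)]
  | i :: w, c, c', e, e', hc, he => by
      simp only [shuffleFn]
      rw [shuffleFn_congr w (lshift i c) (lshift i c') e e'
          (fun v hv => hc (i :: v) (by simpa using Nat.succ_le_succ hv))
          (fun v hv => he v (Nat.le_succ_of_le hv)),
        shuffleFn_congr w c c' (lshift i e) (lshift i e')
          (fun v hv => hc v (Nat.le_succ_of_le hv))
          (fun v hv => he (i :: v) (by simpa using Nat.succ_le_succ hv))]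

lemma shuffleFn_zero_right : ∀ (w : Word) (c : Series),
    shuffleFn c (fun _ => 0) w = 0
  | [], c => by simp [shuffleFn]
  | i :: w, c => by
      simp only [shuffleFn]
      rw [shuffleFn_congr w c c (lshift i fun _ => 0) (fun _ => 0)
        (fun _ _ => rfl) (fun v _ => rfl)]
      rw [shuffleFn_zero_right w (lshift i c), shuffleFn_zero_right w c]
      ring

lemma shuffleFn_zero_left : ∀ (w : Word) (e : Series),
    shuffleFn (fun _ => 0) e w = 0
  | [], e => by simp [shuffleFn]
  | i :: w, e => by
      simp only [shuffleFn]
      rw [shuffleFn_congr w (lshift i fun _ => 0) (fun _ => 0) e e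
        (fun _ _ => rfl) (fun _ _ => rfl)]
      rw [shuffleFn_zero_left w (lshift i e), shuffleFn_zero_left w e]
      ring

lemma shuffleFn_add_right : ∀ (w : Word) (c e e' : Series),
    shuffleFn c (fun v => e v + e' v) w = shuffleFn c e w + shuffleFn c e' w
  | [], c, e, e' => by simp [shuffleFn]; ring
  | i :: w, c, e, e' => by
      simp only [shuffleFn]
      rw [shuffleFn_add_right w (lshift i c) e e']
      rw [shuffleFn_congr w c c (lshift i fun v => e v + e' v)
        (fun v => (lshift i e) v + (lshift i e') v) (fun _ _ => rfl) (fun _ _ => rfl)]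
      rw [shuffleFn_add_right w c (lshift i e) (lshift i e')]
      ring

lemma shuffleFn_smul_right : ∀ (w : Word) (c e : Series) (r : ℝ),
    shuffleFn c (fun v => r * e v) w = r * shuffleFn c e w
  | [], c, e, r => by simp [shuffleFn]; ring
  | i :: w, c, e, r => by
      simp only [shuffleFn]
      rw [shuffleFn_smul_right w (lshift i c) e r]
      rw [shuffleFn_congr w c c (lshift i fun v => r * e v)
        (fun v => r * (lshift i e) v) (fun _ _ => rfl) (fun _ _ => rfl)]
      rw [shuffleFn_smul_right w c (lshift i e) r]
      ring

lemma shuffleFn_neg_right (w : Word) (c e : Series) :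
    shuffleFn c (fun v => - e v) w = - shuffleFn c e w := by
  have := shuffleFn_smul_right w c e (-1)
  simpa using this

lemma shuffleFn_sum_right {α : Type*} [DecidableEq α] (s : Finset α) (w : Word) (c : Series)
    (f : α → Series) :
    shuffleFn c (fun v => ∑ x ∈ s, f x v) w = ∑ x ∈ s, shuffleFn c (f x) w := by
  induction s using Finset.induction_on with
  | empty => simpa using shuffleFn_zero_right w c
  | insert _ _ hx ih =>
      rename_i a s
      rw [Finset.sum_insert hx]
      rw [shuffleFn_congr w c c _ (fun v => f a v + ∑ x ∈ s, f x v)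
        (fun _ _ => rfl) (fun v _ => by rw [Finset.sum_insert hx])]
      rw [shuffleFn_add_right, ih]

/-- Support lemma: if `e` vanishes below weight `m`, the shuffle with anything
vanishes below weight `m`. -/
lemma shuffleFn_support (kap : Fin 2 → ℕ) : ∀ (w : Word) (c e : Series) (m : ℕ),
    (∀ v : Word, e v ≠ 0 → m ≤ wt2 kap v) → wt2 kap w < m → shuffleFn c e w = 0
  | [], c, e, m, he, hw => by
      simp only [shuffleFn]
      have : e [] = 0 := by
        by_contra h
        have h1 := he [] h
        simp only [wt2_nil] at h1 hw
        omega
      rw [this]; ring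
  | i :: w, c, e, m, he, hw => by
      simp only [shuffleFn]
      rw [shuffleFn_support kap w (lshift i c) e m he
        (by simp only [wt2_cons] at hw; omega)]
      rw [shuffleFn_support kap w c (lshift i e) (m - kap i)
        (fun v hv => by
          have := he (i :: v) hv
          simp only [wt2_cons] at this
          omega)
        (by simp only [wt2_cons] at hw; omega)]
      ring

/-- Binomial formula for shuffles along all-ones words. -/
lemma shuffleFn_replicate : ∀ (n : ℕ) (a b : Series),
    shuffleFn a b (List.replicate n 1) =
      ∑ i ∈ Finset.range (n + 1), (n.choose i : ℝ) *
        (a (List.replicate i 1) * b (List.replicate (n - i) 1))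
  | 0, a, b => by simp [shuffleFn]
  | n + 1, a, b => by
      rw [List.replicate_succ]
      simp only [shuffleFn]
      rw [shuffleFn_congr (List.replicate n 1) (lshift 1 a) (fun v => a (1 :: v)) b b
          (fun _ _ => rfl) (fun _ _ => rfl),
        shuffleFn_congr (List.replicate n 1) a a (lshift 1 b) (fun v => b (1 :: v))
          (fun _ _ => rfl) (fun _ _ => rfl),
        shuffleFn_replicate n (fun v => a (1 :: v)) b,
        shuffleFn_replicate n a (fun v => b (1 :: v))]
      have key1 : (∑ i ∈ Finset.range (n+1), (n.choose i : ℝ) *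
          ((fun v : Word => a (1 :: v)) (List.replicate i 1) * b (List.replicate (n - i) 1)))
          = ∑ i ∈ Finset.range (n+1), (n.choose i : ℝ) *
            (a (List.replicate (i+1) 1) * b (List.replicate (n - i) 1)) := by
        refine Finset.sum_congr rfl fun i hi => ?_
        rw [List.replicate_succ]
      have key2 : (∑ i ∈ Finset.range (n+1), (n.choose i : ℝ) *
          (a (List.replicate i 1) * (fun v : Word => b (1 :: v)) (List.replicate (n - i) 1)))
          = ∑ i ∈ Finset.range (n+1), (n.choose i : ℝ) *
            (a (List.replicate i 1) * b (List.replicate (n + 1 - i) 1)) := by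
        refine Finset.sum_congr rfl fun i hi => ?_
        simp only [Finset.mem_range] at hi
        have h1 : (1 : Fin 2) :: List.replicate (n - i) 1 = List.replicate (n + 1 - i) 1 := by
          rw [← List.replicate_succ]
          congr 1
          omega
        simp only [← h1]
      rw [key1, key2]
      rw [Finset.sum_range_succ' (fun i => ((n+1).choose i : ℝ) *
        (a (List.replicate i 1) * b (List.replicate (n + 1 - i) 1))) (n+1)]
      have hred : ∀ i : ℕ, n + 1 - (i + 1) = n - i := fun i => by omega
      have hsplit : (∑ i ∈ Finset.range (n+1), ((n+1).choose (i+1) : ℝ) *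
            (a (List.replicate (i+1) 1) * b (List.replicate (n + 1 - (i+1)) 1)))
          = (∑ i ∈ Finset.range (n+1), (n.choose i : ℝ) *
              (a (List.replicate (i+1) 1) * b (List.replicate (n - i) 1)))
            + ∑ i ∈ Finset.range (n+1), (n.choose (i+1) : ℝ) *
              (a (List.replicate (i+1) 1) * b (List.replicate (n - i) 1)) := by
        rw [← Finset.sum_add_distrib]
        refine Finset.sum_congr rfl fun i hi => ?_
        rw [hred i, Nat.choose_succ_succ]
        push_cast
        ring
      rw [hsplit]
      have hlast : (∑ i ∈ Finset.range (n+1), (n.choose i : ℝ) *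
            (a (List.replicate i 1) * b (List.replicate (n + 1 - i) 1)))
          = (∑ i ∈ Finset.range (n+1), (n.choose (i+1) : ℝ) *
              (a (List.replicate (i+1) 1) * b (List.replicate (n - i) 1)))
            + ((n+1).choose 0 : ℝ) * (a (List.replicate 0 1) * b (List.replicate (n + 1 - 0) 1)) := by
        rw [Finset.sum_range_succ' (fun i => (n.choose i : ℝ) *
          (a (List.replicate i 1) * b (List.replicate (n + 1 - i) 1))) n]
        rw [Finset.sum_range_succ (fun i => (n.choose (i+1) : ℝ) *
          (a (List.replicate (i+1) 1) * b (List.replicate (n - i) 1))) n]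
        have : (n.choose (n+1) : ℝ) = 0 := by
          rw [Nat.choose_eq_zero_of_lt (by omega)]; norm_num
        rw [this]
        simp only [hred]
        norm_num
      rw [hlast]
      ring

end Paper

namespace Paper

/-! ### Coefficient lemmas for `phi` -/

lemma fin2 : ∀ i : Fin 2, i = 0 ∨ i = 1 := by decide

lemma phi_cons_nil (d : Series) (i : Fin 2) (ξ : Word) (e : Series) :
    phi d (i :: ξ) e [] = 0 := by
  show phiLetter d i (phi d ξ e) [] = 0
  fin_cases i <;> simp [phiLetter, lconcat, Pi.add_apply]

lemma phi_cons_00 (d : Series) (ξ : Word) (e : Series) (w : Word) :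
    phi d (0 :: ξ) e (0 :: w) = phi d ξ e w := by
  show phiLetter d 0 (phi d ξ e) (0 :: w) = _
  simp [phiLetter, lconcat]

lemma phi_cons_01 (d : Series) (ξ : Word) (e : Series) (w : Word) :
    phi d (0 :: ξ) e (1 :: w) = 0 := by
  show phiLetter d 0 (phi d ξ e) (1 :: w) = _
  simp [phiLetter, lconcat]

lemma phi_cons_11 (d : Series) (ξ : Word) (e : Series) (w : Word) :
    phi d (1 :: ξ) e (1 :: w) = phi d ξ e w := by
  show phiLetter d 1 (phi d ξ e) (1 :: w) = _
  simp [phiLetter, lconcat, Pi.add_apply]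

lemma phi_cons_10 (d : Series) (ξ : Word) (e : Series) (w : Word) :
    phi d (1 :: ξ) e (0 :: w) = shuffleFn d (phi d ξ e) w := by
  show phiLetter d 1 (phi d ξ e) (0 :: w) = _
  simp [phiLetter, lconcat, Pi.add_apply, sh]

lemma wt2_len (w : Word) : wt2 (fun _ => 1) w = w.length := by
  induction w with
  | nil => rfl
  | cons i v ih => simp [wt2_cons, ih]; omega

lemma phi_one_len : ∀ (ξ : Word) (d : Series) (w : Word),
    w.length < ξ.length → phi d ξ one w = 0
  | [], d, w, h => absurd h (by simp)
  | i :: ξ, d, [], h => phi_cons_nil d i ξ one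
  | i :: ξ, d, j :: v, h => by
      have hv : v.length < ξ.length := by simpa using h
      rcases fin2 i with rfl | rfl <;> rcases fin2 j with rfl | rfl
      · rw [phi_cons_00]; exact phi_one_len ξ d v hv
      · rw [phi_cons_01]
      · rw [phi_cons_10]
        refine shuffleFn_support (fun _ => 1) v d (phi d ξ one) ξ.length
          (fun u hu => ?_) (by rw [wt2_len]; exact hv)
        rw [wt2_len]
        by_contra hlen
        exact hu (phi_one_len ξ d u (by omega))
      · rw [phi_cons_11]; exact phi_one_len ξ d v hv

/-- The weight `‖x0‖ = 2`, `‖x1‖ = 1`. -/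
def kapW : Fin 2 → ℕ := fun i => if i = 0 then 2 else 1

lemma kapW_pos : ∀ i, 0 < kapW i := by decide

@[simp] lemma kapW_zero : kapW 0 = 2 := rfl
@[simp] lemma kapW_one : kapW 1 = 1 := rfl

lemma one_nil : one [] = 1 := rfl
lemma one_cons (i : Fin 2) (w : Word) : one (i :: w) = 0 := by simp [one, ind]

/-- Triangularity: `⟨φ_d(ξ)(1), η⟩ = δ_{ξ,η}` whenever `‖η‖ ≤ ‖ξ‖`. -/
lemma phi_one_diag : ∀ (ξ : Word) (d : Series) (η : Word),
    wt2 kapW η ≤ wt2 kapW ξ → phi d ξ one η = if ξ = η then 1 else 0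
  | [], d, η, h => by
      have : η = [] := wt2_eq_zero kapW_pos (by simpa using h)
      subst this
      simp [phi, one_nil]
  | i :: ξ, d, [], h => by
      rw [phi_cons_nil]
      simp
  | i :: ξ, d, j :: w, h => by
      rcases fin2 i with rfl | rfl <;> rcases fin2 j with rfl | rfl
      · rw [phi_cons_00, phi_one_diag ξ d w (by simp only [wt2_cons] at h ⊢; omega)]
        simp
      · rw [phi_cons_01]
        simp
      · rw [phi_cons_10]
        rw [shuffleFn_support kapW w d (phi d ξ one) (wt2 kapW ξ)
          (fun u hu => by
            by_contra hlt
            push_neg at hlt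
            have := phi_one_diag ξ d u (le_of_lt hlt)
            rw [if_neg (fun hequ => by subst hequ; omega)] at this
            exact hu this)
          (by simp only [wt2_cons, kapW_zero, kapW_one] at h ⊢; omega)]
        simp
      · rw [phi_cons_11, phi_one_diag ξ d w (by simp only [wt2_cons] at h ⊢; omega)]
        simp

lemma phi_one_self (ξ : Word) (d : Series) : phi d ξ one ξ = 1 := by
  rw [phi_one_diag ξ d ξ le_rfl, if_pos rfl]

/-! ### The finite sets of words of length at most `n` -/

def WL : ℕ → Finset Word
  | 0 => {([] : Word)}
  | n + 1 => insert ([] : Word)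
      (((WL n).image (List.cons 0)) ∪ ((WL n).image (List.cons 1)))

lemma mem_WL : ∀ (n : ℕ) (ξ : Word), ξ ∈ WL n ↔ ξ.length ≤ n
  | 0, ξ => by simp [WL, List.length_eq_zero_iff, Nat.le_zero]
  | n + 1, ξ => by
      cases ξ with
      | nil => simp [WL]
      | cons j v =>
          simp only [WL, Finset.mem_insert, Finset.mem_union, Finset.mem_image]
          constructor
          · rintro (h | ⟨x, hx, hex⟩ | ⟨x, hx, hex⟩)
            · exact absurd h (by simp)
            · injection hex with h0 h1
              subst h1
              simpa using Nat.succ_le_succ ((mem_WL n x).mp hx)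
            · injection hex with h0 h1
              subst h1
              simpa using Nat.succ_le_succ ((mem_WL n x).mp hx)
          · intro hlen
            have hv : v ∈ WL n := (mem_WL n v).mpr (by simpa using hlen)
            rcases fin2 j with rfl | rfl
            · exact Or.inr (Or.inl ⟨v, hv, rfl⟩)
            · exact Or.inr (Or.inr ⟨v, hv, rfl⟩)

lemma sum_WL_succ (F : Word → ℝ) (hF : F [] = 0) (n : ℕ) :
    ∑ ξ ∈ WL (n + 1), F ξ =
      (∑ ξ ∈ WL n, F (0 :: ξ)) + ∑ ξ ∈ WL n, F (1 :: ξ) := by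
  show ∑ ξ ∈ insert ([] : Word) _, F ξ = _
  rw [Finset.sum_insert (by simp)]
  rw [hF, zero_add]
  rw [Finset.sum_union (by
    rw [Finset.disjoint_left]
    intro a ha hb
    rw [Finset.mem_image] at ha hb
    obtain ⟨x, _, rfl⟩ := ha
    obtain ⟨y, _, hy⟩ := hb
    injection hy with h1 _
    exact absurd h1 (by decide))]
  rw [Finset.sum_image (fun x _ y _ h => by injection h),
    Finset.sum_image (fun x _ y _ h => by injection h)]

lemma WL_mono {m n : ℕ} (h : m ≤ n) : WL m ⊆ WL n := fun ξ hx =>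
  (mem_WL n ξ).mpr (le_trans ((mem_WL m ξ).mp hx) h)

/-! ### Generic-coefficient version of `phi` -/

section Generic

variable {R S : Type*} [CommSemiring R] [CommSemiring S]

def lconR (i : Fin 2) (e : Word → R) : Word → R := fun w =>
  match w with
  | [] => 0
  | j :: v => if j = i then e v else 0

def shR : (Word → R) → (Word → R) → Word → R
  | c, e, [] => c [] * e []
  | c, e, i :: w => shR (fun v => c (i :: v)) e w + shR c (fun v => e (i :: v)) w

def phiLRg (d : Word → R) (i : Fin 2) (e : Word → R) : Word → R :=
  if i = 0 then lconR 0 e else fun w => lconR 1 e w + lconR 0 (shR d e) w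

def phiRg (d : Word → R) : Word → (Word → R) → (Word → R)
  | [], e => e
  | i :: ξ, e => phiLRg d i (phiRg d ξ e)

def oneRg : Word → R := fun w => if w = [] then 1 else 0

variable (f : R →+* S)

lemma shR_map : ∀ (w : Word) (c e : Word → R),
    f (shR c e w) = shR (fun v => f (c v)) (fun v => f (e v)) w
  | [], c, e => by simp [shR]
  | i :: w, c, e => by
      simp only [shR, map_add]
      rw [shR_map w (fun v => c (i :: v)) e, shR_map w c (fun v => e (i :: v))]

lemma lconR_map (i : Fin 2) (e : Word → R) (w : Word) :
    f (lconR i e w) = lconR i (fun v => f (e v)) w := by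
  cases w with
  | nil => simp [lconR]
  | cons j v => simp only [lconR]; rw [apply_ite f, map_zero]

lemma phiLRg_map (d : Word → R) (i : Fin 2) (e : Word → R) (w : Word) :
    f (phiLRg d i e w) = phiLRg (fun v => f (d v)) i (fun v => f (e v)) w := by
  rcases fin2 i with rfl | rfl
  · show f (lconR 0 e w) = lconR 0 (fun v => f (e v)) w
    exact lconR_map f 0 e w
  · show f (lconR 1 e w + lconR 0 (shR d e) w) =
      lconR 1 (fun v => f (e v)) w + lconR 0 (shR (fun v => f (d v)) (fun v => f (e v))) w
    rw [map_add, lconR_map f 1 e w, lconR_map f 0 (shR d e) w]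
    have h4 : (fun v => f (shR d e v)) =
        shR (fun v => f (d v)) (fun v => f (e v)) := funext fun v => shR_map f v d e
    rw [h4]

lemma phiRg_map (d : Word → R) : ∀ (ξ : Word) (e : Word → R) (w : Word),
    f (phiRg d ξ e w) = phiRg (fun v => f (d v)) ξ (fun v => f (e v)) w
  | [], e, w => rfl
  | i :: ξ, e, w => by
      show f (phiLRg d i (phiRg d ξ e) w) = phiLRg _ i (phiRg _ ξ fun v => f (e v)) w
      rw [phiLRg_map f d i (phiRg d ξ e) w]
      congr 1
      funext v
      exact phiRg_map d ξ e v

end Generic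

lemma shR_real : ∀ (w : Word) (c e : Series), shR c e w = shuffleFn c e w
  | [], c, e => rfl
  | i :: w, c, e => by
      simp only [shR, shuffleFn]
      rw [shR_real w _ e, shR_real w c _]
      rfl

lemma lconR_real (i : Fin 2) (e : Series) : lconR i e = lconcat i e := by
  funext w
  cases w <;> rfl

lemma phiRg_real (d : Series) : ∀ (ξ : Word) (e : Series),
    phiRg d ξ e = phi d ξ e
  | [], e => rfl
  | i :: ξ, e => by
      show phiLRg d i (phiRg d ξ e) = phiLetter d i (phi d ξ e)
      rw [phiRg_real d ξ e]
      rcases fin2 i with rfl | rfl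
      · show lconR 0 (phi d ξ e) = lconcat 0 (phi d ξ e)
        exact lconR_real 0 _
      · show (fun w => lconR 1 (phi d ξ e) w + lconR 0 (shR d (phi d ξ e)) w) = _
        show _ = lconcat 1 (phi d ξ e) + lconcat 0 (sh d (phi d ξ e))
        funext w
        rw [Pi.add_apply, lconR_real 1, lconR_real 0]
        congr 2
        funext v
        rw [shR_real]
        rfl

lemma oneRg_real : (oneRg : Series) = one := by
  funext w
  simp [oneRg, one, ind]

/-- The universal coefficient polynomial `Q_{ξ,η} ∈ H` with
`Q_{ξ,η}(d) = ⟨φ_d(ξ)(1), η⟩`. -/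
def Qp (ξ η : Word) : H := phiRg (R := H) (fun v => aw v) ξ oneRg η

lemma evalQ (d : Series) (ξ η : Word) : evalS d (Qp ξ η) = phi d ξ one η := by
  have h1 : evalS d (Qp ξ η) =
      phiRg (fun v => evalS d (aw v)) ξ (fun v => (evalS d) (oneRg v)) η :=
    phiRg_map (evalS d : H →+* ℝ) (fun v => aw v) ξ oneRg η
  rw [h1]
  have h2 : (fun v => evalS d (aw v)) = d := by
    funext v; simp [evalS, aw]
  have h3 : (fun v => (evalS d) (oneRg v : H)) = (oneRg : Series) := by
    funext v
    simp only [oneRg]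
    rw [apply_ite (evalS d), map_one, map_zero]
  rw [h2, h3, oneRg_real, phiRg_real]

end Paper

namespace Paper

open MvPolynomial

lemma evalPair_tmul (c d : Series) (p q : H) :
    evalPair c d (p ⊗ₜ[ℝ] q) = evalS c p * evalS d q := by
  simp [evalPair, TensorProduct.map_tmul, LinearMap.mul'_apply]

lemma evalS_aw (c : Series) (η : Word) : evalS c (aw η) = c η := by
  simp [evalS, aw]

lemma mcomp_eq_sum (c d : Series) (η : Word) :
    mcomp c d η = ∑ ξ ∈ WL η.length, c ξ * phi d ξ one η := by
  refine tsum_eq_sum ?_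
  intro ξ hξ
  rw [phi_one_len ξ d η (by
    by_contra hc
    exact hξ ((mem_WL η.length ξ).mpr (by omega)))]
  ring

/-- The explicit coproduct value on the generator `a_η`. -/
noncomputable def Delta0 (η : Word) : H ⊗[ℝ] H :=
  (1 : H) ⊗ₜ[ℝ] aw η + ∑ ξ ∈ WL η.length, aw ξ ⊗ₜ[ℝ] Qp ξ η

lemma evalPair_Delta0 (c d : Series) (η : Word) :
    evalPair c d (Delta0 η) = mcomp c d η + d η := by
  rw [Delta0, map_add, map_sum, evalPair_tmul, map_one, one_mul, evalS_aw]
  rw [Finset.sum_congr rfl (fun ξ _ => by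
    rw [evalPair_tmul, evalS_aw, evalQ])]
  rw [← mcomp_eq_sum]
  ring

noncomputable def PhiT : (H ⊗[ℝ] H) →ₐ[ℝ] MvPolynomial (Word ⊕ Word) ℝ :=
  Algebra.TensorProduct.lift
    (aeval fun ξ => X (Sum.inl ξ)) (aeval fun ν => X (Sum.inr ν))
    (fun _ _ => Commute.all _ _)

noncomputable def PsiT : MvPolynomial (Word ⊕ Word) ℝ →ₐ[ℝ] (H ⊗[ℝ] H) :=
  aeval (Sum.elim (fun ξ => aw ξ ⊗ₜ[ℝ] (1 : H)) (fun ν => (1 : H) ⊗ₜ[ℝ] aw ν))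

lemma PsiPhi (t : H ⊗[ℝ] H) : PsiT (PhiT t) = t := by
  have h : PsiT.comp PhiT = AlgHom.id ℝ (H ⊗[ℝ] H) := by
    apply Algebra.TensorProduct.ext
    · apply MvPolynomial.algHom_ext
      intro ξ
      simp [PsiT, PhiT, Algebra.TensorProduct.lift_tmul, aw]
    · apply MvPolynomial.algHom_ext
      intro ν
      simp [PsiT, PhiT, Algebra.TensorProduct.lift_tmul, aw]
  calc PsiT (PhiT t) = (PsiT.comp PhiT) t := rfl
  _ = t := by rw [h]; rfl

lemma eval_PhiT (x : Word ⊕ Word → ℝ) (t : H ⊗[ℝ] H) :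
    aeval x (PhiT t) = evalPair (fun ξ => x (Sum.inl ξ)) (fun ν => x (Sum.inr ν)) t := by
  induction t using TensorProduct.induction_on with
  | zero => simp
  | tmul p q =>
      rw [show PhiT (p ⊗ₜ[ℝ] q) =
        (aeval fun ξ => (X (Sum.inl ξ) : MvPolynomial (Word ⊕ Word) ℝ)) p *
        (aeval fun ν => (X (Sum.inr ν) : MvPolynomial (Word ⊕ Word) ℝ)) q from
        Algebra.TensorProduct.lift_tmul _ _ _ p q]
      rw [map_mul, evalPair_tmul]
      congr 1
      · have h : (aeval x).comp
            (aeval fun ξ => (X (Sum.inl ξ) : MvPolynomial (Word ⊕ Word) ℝ)) =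
            aeval (R := ℝ) (fun ξ => x (Sum.inl ξ)) := by
          apply MvPolynomial.algHom_ext; intro i; simp
        calc aeval x ((aeval fun ξ => (X (Sum.inl ξ) : MvPolynomial (Word ⊕ Word) ℝ)) p)
            = ((aeval x).comp (aeval fun ξ => (X (Sum.inl ξ) :
                MvPolynomial (Word ⊕ Word) ℝ))) p := rfl
        _ = _ := by rw [h]; rfl
      · have h : (aeval x).comp
            (aeval fun ν => (X (Sum.inr ν) : MvPolynomial (Word ⊕ Word) ℝ)) =
            aeval (R := ℝ) (fun ν => x (Sum.inr ν)) := by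
          apply MvPolynomial.algHom_ext; intro i; simp
        calc aeval x ((aeval fun ν => (X (Sum.inr ν) : MvPolynomial (Word ⊕ Word) ℝ)) q)
            = ((aeval x).comp (aeval fun ν => (X (Sum.inr ν) :
                MvPolynomial (Word ⊕ Word) ℝ))) q := rfl
        _ = _ := by rw [h]; rfl
  | add a b ha hb => rw [map_add, map_add, map_add, ha, hb]

lemma Delta_eq (Δ : H →ₐ[ℝ] (H ⊗[ℝ] H)) (hΔ : IsFBCoproduct Δ) (η : Word) :
    Δ (aw η) = Delta0 η := by
  have key : ∀ x : Word ⊕ Word → ℝ,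
      aeval x (PhiT (Δ (aw η))) = aeval x (PhiT (Delta0 η)) := by
    intro x
    rw [eval_PhiT, eval_PhiT, hΔ η _ _, evalPair_Delta0]
  have h2 : PhiT (Δ (aw η)) = PhiT (Delta0 η) := by
    apply MvPolynomial.funext
    intro x
    have hx := key x
    have hconv : ∀ p : MvPolynomial (Word ⊕ Word) ℝ, eval x p = aeval x p := by
      intro p
      rw [← MvPolynomial.coe_aeval_eq_eval]
      rfl
    rw [hconv, hconv, hx]
  calc Δ (aw η) = PsiT (PhiT (Δ (aw η))) := (PsiPhi _).symm
  _ = PsiT (PhiT (Delta0 η)) := by rw [h2]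
  _ = Delta0 η := PsiPhi _

lemma counit_aw (η : Word) : counit (aw η) = 0 := by
  simp [counit, evalS, aw]

lemma S_one {Δ : H →ₐ[ℝ] (H ⊗[ℝ] H)} {S : H →ₗ[ℝ] H} (hS : IsAntipode Δ S) :
    S 1 = 1 := by
  have h := hS.1 1
  rw [map_one Δ, Algebra.TensorProduct.one_def, TensorProduct.map_tmul,
    LinearMap.mul'_apply, map_one counit] at h
  simpa using h

/-- The fundamental linear equation satisfied by
`F(ξ) = (S a_ξ)(-c)` coming from the antipode property. -/
lemma antipode_equation (Δ : H →ₐ[ℝ] (H ⊗[ℝ] H)) (hΔ : IsFBCoproduct Δ)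
    (S : H →ₗ[ℝ] H) (hS : IsAntipode Δ S) (dm : Series) (η : Word) :
    dm η + ∑ ξ ∈ WL η.length,
      evalS dm (S (aw ξ)) * phi dm ξ one η = 0 := by
  have h := hS.1 (aw η)
  rw [Delta_eq Δ hΔ η, counit_aw, zero_smul, Delta0, map_add, map_sum] at h
  simp only [TensorProduct.map_tmul, LinearMap.id_apply] at h
  rw [map_add, map_sum] at h
  simp only [LinearMap.mul'_apply] at h
  rw [S_one hS, one_mul] at h
  have h2 := congrArg (evalS dm) h
  rw [map_add, map_sum, map_zero] at h2
  rw [Finset.sum_congr rfl (fun ξ _ => by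
    rw [map_mul, evalQ])] at h2
  rw [evalS_aw] at h2
  exact h2

end Paper

namespace Paper

/-! ### All-ones support lemmas -/

lemma shuffleFn_ones : ∀ (w : Word) (a b : Series),
    (∀ v, (0 : Fin 2) ∈ v → a v = 0) → (∀ v, (0 : Fin 2) ∈ v → b v = 0) →
    (0 : Fin 2) ∈ w → shuffleFn a b w = 0
  | [], a, b, ha, hb, hw => absurd hw (by simp)
  | i :: w, a, b, ha, hb, hw => by
      simp only [shuffleFn]
      rcases fin2 i with rfl | rfl
      · rw [shuffleFn_congr w (lshift 0 a) (fun _ => 0) b b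
          (fun v _ => ha (0 :: v) (by simp)) (fun _ _ => rfl), shuffleFn_zero_left]
        rw [shuffleFn_congr w a a (lshift 0 b) (fun _ => 0)
          (fun _ _ => rfl) (fun v _ => hb (0 :: v) (by simp)), shuffleFn_zero_right]
        ring
      · have hw' : (0 : Fin 2) ∈ w := by
          rcases List.mem_cons.mp hw with h | h
          · exact absurd h (by decide)
          · exact h
        rw [shuffleFn_ones w (lshift 1 a) b
          (fun v hv => ha (1 :: v) (by simp [hv])) hb hw']
        rw [shuffleFn_ones w a (lshift 1 b) ha
          (fun v hv => hb (1 :: v) (by simp [hv])) hw']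
        ring

lemma ferfera_replicate (n : ℕ) : ferfera (List.replicate n 1) = (n.factorial : ℝ) := by
  simp [ferfera]

lemma ferfera_of_zero_mem {w : Word} (h : (0 : Fin 2) ∈ w) : ferfera w = 0 := by
  rw [ferfera, if_neg]
  intro hc
  exact absurd (List.eq_of_mem_replicate (hc ▸ h)) (by decide)

lemma neg_ferfera_zero_mem {v : Word} (h : (0 : Fin 2) ∈ v) : (-ferfera) v = 0 := by
  rw [Pi.neg_apply, ferfera_of_zero_mem h, neg_zero]

lemma zero_mem_or_replicate (w : Word) :
    w = List.replicate w.length 1 ∨ (0 : Fin 2) ∈ w := by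
  by_cases h : (0 : Fin 2) ∈ w
  · exact Or.inr h
  · refine Or.inl (List.eq_replicate_length.mpr fun b hb => ?_)
    rcases fin2 b with rfl | rfl
    · exact absurd hb h
    · rfl

lemma zero_not_mem_replicate (n : ℕ) : (0 : Fin 2) ∉ List.replicate n 1 := by
  intro h
  exact absurd (List.eq_of_mem_replicate h) (by decide)

/-! ### The operator `θ̃₁` and its powers -/

def T1 : H →ₗ[ℝ] H := (thetaR 1).toLinearMap

lemma T1_aw (ν : Word) : T1 (aw ν) = aw (ν ++ [1]) := by
  simp [T1, thetaR, aw, MvPolynomial.mkDerivation_X]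

lemma T1_leibniz (p q : H) : T1 (p * q) = p * T1 q + q * T1 p := by
  have := (thetaR 1).leibniz p q
  simpa [T1, smul_eq_mul] using this

lemma T1_pow_aw (n : ℕ) (ν : Word) :
    (T1 ^ n) (aw ν) = aw (ν ++ List.replicate n 1) := by
  induction n generalizing ν with
  | zero => simp
  | succ n ih =>
      rw [pow_succ, Module.End.mul_apply, T1_aw, ih]
      congr 1
      simp [List.append_assoc, List.replicate_succ]

lemma thetaHat_one_apply (h : H) : thetaHat 1 h = -(T1 h) := by
  rw [thetaHat, if_neg (by decide)]
  rfl

lemma thetaHat_zero_apply (h : H) : thetaHat 0 h = T1 h * aw [] := by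
  rw [thetaHat, if_pos rfl]
  simp [kappaE, T1, LinearMap.mulRight_apply]

/-! ### The closed-form solution `Z` -/

def Zf (h : H) (w : Word) : ℝ :=
  if (0 : Fin 2) ∈ w then 0 else evalS (-ferfera) ((T1 ^ w.length) h)

lemma Zf_zero_mem (h : H) {w : Word} (hw : (0 : Fin 2) ∈ w) : Zf h w = 0 :=
  if_pos hw

lemma Zf_not_mem (h : H) {w : Word} (hw : (0 : Fin 2) ∉ w) :
    Zf h w = evalS (-ferfera) ((T1 ^ w.length) h) := if_neg hw

lemma Zf_nil (h : H) : Zf h [] = evalS (-ferfera) h := by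
  rw [Zf_not_mem h (by simp)]
  simp

lemma Zf_neg (p : H) (w : Word) : Zf (-p) w = - Zf p w := by
  unfold Zf
  split_ifs
  · ring
  · rw [map_neg, map_neg]

lemma Zf_ones_supported (h : H) : ∀ v, (0 : Fin 2) ∈ v → Zf h v = 0 :=
  fun v hv => Zf_zero_mem h hv

lemma Zf_cons_one (h : H) (w : Word) : Zf h (1 :: w) = Zf (T1 h) w := by
  by_cases hm : (0 : Fin 2) ∈ w
  · rw [Zf_zero_mem h (by simp [hm]), Zf_zero_mem _ hm]
  · rw [Zf_not_mem h (by
      intro hc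
      rcases List.mem_cons.mp hc with h' | h'
      · exact absurd h' (by decide)
      · exact hm h'), Zf_not_mem _ hm]
    rw [List.length_cons, pow_succ, Module.End.mul_apply]

/-- The key combinatorial identity: iterated Leibniz rule against `a_{x1^k}`,
evaluated at `-c`. -/
lemma star : ∀ (n k : ℕ) (h : H),
    evalS (-ferfera) ((T1 ^ n) (h * aw (List.replicate k 1))) =
      ∑ i ∈ Finset.range (n + 1), (n.choose i : ℝ) *
        ((-ferfera) (List.replicate (k + i) 1) * evalS (-ferfera) ((T1 ^ (n - i)) h))
  | 0, k, h => by
      simp only [pow_zero, Module.End.one_apply]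
      rw [map_mul, evalS_aw, Finset.sum_range_one]
      simp only [Nat.choose_zero_right, Nat.cast_one, Nat.add_zero, Nat.sub_self,
        pow_zero, Module.End.one_apply, one_mul]
      ring
  | n + 1, k, h => by
      have hstep : (T1 ^ (n + 1)) (h * aw (List.replicate k 1)) =
          (T1 ^ n) ((T1 h) * aw (List.replicate k 1)) +
          (T1 ^ n) (h * aw (List.replicate (k + 1) 1)) := by
        rw [pow_succ, Module.End.mul_apply, T1_leibniz, T1_aw,
          ← List.replicate_succ',
          mul_comm (aw (List.replicate k 1)) (T1 h), map_add, add_comm]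
      rw [hstep, map_add, star n k (T1 h), star n (k + 1) h]
      have e1 : ∑ i ∈ Finset.range (n + 1), (n.choose i : ℝ) *
            ((-ferfera) (List.replicate (k + i) 1) *
              evalS (-ferfera) ((T1 ^ (n - i)) (T1 h)))
          = ∑ i ∈ Finset.range (n + 1), (n.choose i : ℝ) *
            ((-ferfera) (List.replicate (k + i) 1) *
              evalS (-ferfera) ((T1 ^ (n + 1 - i)) h)) := by
        refine Finset.sum_congr rfl fun i hi => ?_
        simp only [Finset.mem_range] at hi
        have : (T1 ^ (n - i)) (T1 h) = (T1 ^ (n - i + 1)) h := by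
          rw [pow_succ, Module.End.mul_apply]
        rw [this, show n - i + 1 = n + 1 - i by omega]
      rw [e1]
      -- now a pure binomial bookkeeping identity
      rw [Finset.sum_range_succ' (fun i => ((n+1).choose i : ℝ) *
        ((-ferfera) (List.replicate (k + i) 1) *
          evalS (-ferfera) ((T1 ^ (n + 1 - i)) h))) (n + 1)]
      have hsplit : (∑ i ∈ Finset.range (n + 1), ((n+1).choose (i+1) : ℝ) *
            ((-ferfera) (List.replicate (k + (i+1)) 1) *
              evalS (-ferfera) ((T1 ^ (n + 1 - (i+1))) h)))
          = (∑ i ∈ Finset.range (n + 1), (n.choose i : ℝ) *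
              ((-ferfera) (List.replicate (k + 1 + i) 1) *
                evalS (-ferfera) ((T1 ^ (n - i)) h)))
            + ∑ i ∈ Finset.range (n + 1), (n.choose (i+1) : ℝ) *
              ((-ferfera) (List.replicate (k + (i+1)) 1) *
                evalS (-ferfera) ((T1 ^ (n - i)) h)) := by
        rw [← Finset.sum_add_distrib]
        refine Finset.sum_congr rfl fun i hi => ?_
        rw [show n + 1 - (i + 1) = n - i by omega,
          show k + 1 + i = k + (i + 1) by omega, Nat.choose_succ_succ]
        push_cast
        ring
      rw [hsplit]
      have hlast : (∑ i ∈ Finset.range (n + 1), (n.choose i : ℝ) *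
            ((-ferfera) (List.replicate (k + i) 1) *
              evalS (-ferfera) ((T1 ^ (n + 1 - i)) h)))
          = (∑ i ∈ Finset.range (n + 1), (n.choose (i+1) : ℝ) *
              ((-ferfera) (List.replicate (k + (i+1)) 1) *
                evalS (-ferfera) ((T1 ^ (n - i)) h)))
            + ((n+1).choose 0 : ℝ) *
              ((-ferfera) (List.replicate (k + 0) 1) *
                evalS (-ferfera) ((T1 ^ (n + 1 - 0)) h)) := by
        rw [Finset.sum_range_succ' (fun i => (n.choose i : ℝ) *
          ((-ferfera) (List.replicate (k + i) 1) *
            evalS (-ferfera) ((T1 ^ (n + 1 - i)) h))) n]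
        rw [Finset.sum_range_succ (fun i => (n.choose (i+1) : ℝ) *
          ((-ferfera) (List.replicate (k + (i+1)) 1) *
            evalS (-ferfera) ((T1 ^ (n - i)) h))) n]
        have hz : (n.choose (n+1) : ℝ) = 0 := by
          rw [Nat.choose_eq_zero_of_lt (by omega)]
          norm_num
        rw [hz]
        have hred : ∀ i ∈ Finset.range n, (n.choose (i+1) : ℝ) *
            ((-ferfera) (List.replicate (k + (i+1)) 1) *
              evalS (-ferfera) ((T1 ^ (n + 1 - (i+1))) h))
            = (n.choose (i+1) : ℝ) *
            ((-ferfera) (List.replicate (k + (i+1)) 1) *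
              evalS (-ferfera) ((T1 ^ (n - i)) h)) := by
          intro i hi
          rw [show n + 1 - (i + 1) = n - i by omega]
        rw [Finset.sum_congr rfl hred]
        simp only [Nat.choose_zero_right, Nat.cast_one]
        ring
      rw [hlast]
      ring

/-- `Z(h · a_∅) = (-c) ⧢ Z(h)`. -/
lemma Zf_mul_awnil (h : H) (w : Word) :
    Zf (h * aw []) w = shuffleFn (-ferfera) (Zf h) w := by
  by_cases hw : (0 : Fin 2) ∈ w
  · rw [Zf_zero_mem _ hw,
      shuffleFn_ones w _ _ (fun v hv => neg_ferfera_zero_mem hv)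
        (Zf_ones_supported h) hw]
  · rcases zero_mem_or_replicate w with hrep | hmem
    · rw [Zf_not_mem _ hw]
      rw [show w.length = (List.replicate w.length (1 : Fin 2)).length by
        rw [List.length_replicate]]
      conv_lhs => rw [show (T1 ^ (List.replicate w.length (1:Fin 2)).length) (h * aw []) =
        (T1 ^ (List.replicate w.length (1:Fin 2)).length)
          (h * aw (List.replicate 0 1)) from rfl]
      conv_rhs => rw [hrep]
      rw [List.length_replicate, star w.length 0 h, shuffleFn_replicate]
      refine Finset.sum_congr rfl fun i hi => ?_
      simp only [Finset.mem_range] at hi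
      rw [Zf_not_mem h (zero_not_mem_replicate _), List.length_replicate,
        show (0 : ℕ) + i = i by omega]
    · exact absurd hmem hw

/-! ### The sum `U` and its recursion -/

def ggF (ξ : Word) (h : H) : ℝ := evalS (-ferfera) (thetaHatWord ξ h)

lemma ggF_cons (i : Fin 2) (ξ : Word) (h : H) :
    ggF (i :: ξ) h = ggF ξ (thetaHat i h) := rfl

def Usum (h : H) (η : Word) : ℝ :=
  ∑ ξ ∈ WL η.length, (-1 : ℝ) ^ ξ.length * ggF ξ h * phi (-ferfera) ξ one η

lemma Usum_nil (h : H) : Usum h [] = evalS (-ferfera) h := by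
  rw [Usum]
  show ∑ ξ ∈ ({([] : Word)} : Finset Word), _ = _
  rw [Finset.sum_singleton]
  show (-1 : ℝ) ^ 0 * evalS (-ferfera) (LinearMap.id h) * one [] = _
  rw [one_nil]
  simp

lemma Usum_cons_one (h : H) (w : Word) :
    Usum h (1 :: w) = - Usum (thetaHat 1 h) w := by
  rw [Usum]
  show ∑ ξ ∈ WL (w.length + 1), _ = _
  rw [sum_WL_succ _ (by simp [phi, one, ind]) w.length]
  rw [Finset.sum_eq_zero (fun ξ _ => by rw [phi_cons_01]; ring), zero_add]
  have h1 : ∑ ξ ∈ WL w.length, (-1:ℝ) ^ (1 :: ξ : Word).length * ggF (1 :: ξ) h *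
      phi (-ferfera) (1 :: ξ) one (1 :: w) = - Usum (thetaHat 1 h) w := by
    rw [Usum, ← Finset.sum_neg_distrib]
    refine Finset.sum_congr rfl fun ξ _ => ?_
    rw [phi_cons_11, ggF_cons, List.length_cons, pow_succ]
    ring
  exact h1

lemma Usum_cons_zero (h : H) (w : Word) :
    Usum h (0 :: w) = - Usum (thetaHat 0 h) w
      - shuffleFn (-ferfera) (fun v => ∑ ξ ∈ WL w.length,
          (-1 : ℝ) ^ ξ.length * ggF ξ (thetaHat 1 h) * phi (-ferfera) ξ one v) w := by
  rw [Usum]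
  show ∑ ξ ∈ WL (w.length + 1), _ = _
  rw [sum_WL_succ _ (by simp [phi, one, ind]) w.length]
  have h0 : ∑ ξ ∈ WL w.length, (-1:ℝ) ^ (0 :: ξ : Word).length * ggF (0 :: ξ) h *
      phi (-ferfera) (0 :: ξ) one (0 :: w) = - Usum (thetaHat 0 h) w := by
    rw [Usum, ← Finset.sum_neg_distrib]
    refine Finset.sum_congr rfl fun ξ _ => ?_
    rw [phi_cons_00, ggF_cons, List.length_cons, pow_succ]
    ring
  have h1 : ∑ ξ ∈ WL w.length, (-1:ℝ) ^ (1 :: ξ : Word).length * ggF (1 :: ξ) h *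
      phi (-ferfera) (1 :: ξ) one (0 :: w)
      = - shuffleFn (-ferfera) (fun v => ∑ ξ ∈ WL w.length,
          (-1 : ℝ) ^ ξ.length * ggF ξ (thetaHat 1 h) * phi (-ferfera) ξ one v) w := by
    rw [shuffleFn_sum_right]
    rw [← Finset.sum_neg_distrib]
    refine Finset.sum_congr rfl fun ξ _ => ?_
    rw [phi_cons_10, ggF_cons, List.length_cons, pow_succ]
    rw [shuffleFn_smul_right w (-ferfera) (phi (-ferfera) ξ one)
      ((-1:ℝ) ^ ξ.length * ggF ξ (thetaHat 1 h))]
    ring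
  rw [h0, h1]
  ring

/-- The main induction: `U = Z`. -/
lemma Usum_eq_Zf : ∀ (n : ℕ) (h : H) (η : Word), η.length ≤ n → Usum h η = Zf h η
  | 0, h, η, hη => by
      have : η = [] := by
        cases η with
        | nil => rfl
        | cons i v => simp at hη
      subst this
      rw [Usum_nil, Zf_nil]
  | n + 1, h, η, hη => by
      cases η with
      | nil => rw [Usum_nil, Zf_nil]
      | cons j w =>
          have hw : w.length ≤ n := by simpa using hη
          rcases fin2 j with rfl | rfl
          · -- j = 0
            rw [Usum_cons_zero]
            have hsh : shuffleFn (-ferfera) (fun v => ∑ ξ ∈ WL w.length,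
                (-1 : ℝ) ^ ξ.length * ggF ξ (thetaHat 1 h) * phi (-ferfera) ξ one v) w
                = shuffleFn (-ferfera) (Zf (thetaHat 1 h)) w := by
              refine shuffleFn_congr w _ _ _ _ (fun _ _ => rfl) (fun v hv => ?_)
              have hsub : ∑ ξ ∈ WL w.length,
                  (-1 : ℝ) ^ ξ.length * ggF ξ (thetaHat 1 h) * phi (-ferfera) ξ one v
                  = ∑ ξ ∈ WL v.length,
                  (-1 : ℝ) ^ ξ.length * ggF ξ (thetaHat 1 h) * phi (-ferfera) ξ one v := by
                symm
                refine Finset.sum_subset (WL_mono hv) fun ξ hξw hξv => ?_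
                rw [phi_one_len ξ _ v (by
                  have h1 := (mem_WL w.length ξ).mp hξw
                  by_contra hc
                  exact hξv ((mem_WL v.length ξ).mpr (by omega)))]
                ring
              rw [hsub]
              exact Usum_eq_Zf n (thetaHat 1 h) v (le_trans hv hw)
            rw [hsh, Usum_eq_Zf n (thetaHat 0 h) w hw]
            rw [Zf_zero_mem h (by simp)]
            rw [thetaHat_zero_apply, thetaHat_one_apply]
            have : Zf (-(T1 h)) = fun v => - Zf (T1 h) v := funext fun v => Zf_neg _ v
            rw [this, shuffleFn_neg_right, Zf_mul_awnil]
            ring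
          · -- j = 1
            rw [Usum_cons_one, Usum_eq_Zf n (thetaHat 1 h) w hw]
            rw [thetaHat_one_apply, Zf_neg, neg_neg, Zf_cons_one]

lemma Usum_awnil (η : Word) : Usum (aw []) η = (-ferfera) η := by
  rw [Usum_eq_Zf η.length (aw []) η le_rfl]
  by_cases hm : (0 : Fin 2) ∈ η
  · rw [Zf_zero_mem _ hm, neg_ferfera_zero_mem hm]
  · rcases zero_mem_or_replicate η with hrep | hmem
    · rw [Zf_not_mem _ hm, T1_pow_aw, List.nil_append, evalS_aw, ← hrep]
    · exact absurd hmem hm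

/-! ### The explicit series `r` and the final identification -/

def rrF (ξ : Word) : ℝ :=
  -((-1 : ℝ) ^ ξ.length * evalS (-ferfera) (thetaHatWord ξ (aw [])))

lemma r_equation (η : Word) :
    (-ferfera) η + ∑ ξ ∈ WL η.length, rrF ξ * phi (-ferfera) ξ one η = 0 := by
  have hs : ∑ ξ ∈ WL η.length, rrF ξ * phi (-ferfera) ξ one η
      = - Usum (aw []) η := by
    rw [Usum, ← Finset.sum_neg_distrib]
    refine Finset.sum_congr rfl fun ξ _ => ?_
    rw [rrF]
    show -((-1 : ℝ) ^ ξ.length * ggF ξ (aw [])) * phi (-ferfera) ξ one η = _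
    ring
  rw [hs, Usum_awnil]
  ring

lemma final_key (Δ : H →ₐ[ℝ] (H ⊗[ℝ] H)) (hΔ : IsFBCoproduct Δ)
    (S : H →ₗ[ℝ] H) (hS : IsAntipode Δ S) :
    ∀ (n : ℕ) (η : Word), wt2 kapW η = n →
      evalS (-ferfera) (S (aw η)) = rrF η := by
  intro n
  induction n using Nat.strong_induction_on with
  | _ n ih =>
    intro η hη
    have h1 := antipode_equation Δ hΔ S hS (-ferfera) η
    have h2 := r_equation η
    have h3 : ∑ ξ ∈ WL η.length,
        (evalS (-ferfera) (S (aw ξ)) - rrF ξ) * phi (-ferfera) ξ one η = 0 := by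
      rw [Finset.sum_congr rfl (fun ξ _ => sub_mul (evalS (-ferfera) (S (aw ξ)))
        (rrF ξ) (phi (-ferfera) ξ one η))]
      rw [Finset.sum_sub_distrib]
      linarith [h1, h2]
    have hself : η ∈ WL η.length := (mem_WL _ _).mpr le_rfl
    rw [Finset.sum_eq_single_of_mem η hself (fun ξ hξ hne => ?_)] at h3
    · rw [phi_one_self] at h3
      have := h3
      linarith [this]
    · by_cases hwt : wt2 kapW η ≤ wt2 kapW ξ
      · rw [phi_one_diag ξ _ η hwt, if_neg hne, mul_zero]
      · push_neg at hwt
        rw [ih (wt2 kapW ξ) (by omega) ξ rfl, sub_self, zero_mul]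

end Paper
open Paper in
/-- Let `c = Σ_{k≥0} k! x1^k` be the Ferfera series.  Then for every
nonempty word `η = x_{i_1} ⋯ x_{i_l} ∈ X*`,
`(S a_η)(−c) = (−1)^{|η|−1} (Θ̂′_η (a_∅))(−c)`, where `θ̂′_1 := −θ̃_1` and
`θ̂′_0 := κ_∅ ∘ θ̃_1`; in particular the value `(S a_η)(−c)` depends only on coordinate
functions of the form `a_{x1^n}` and `a_∅`. -/
theorem antipode_ferfera_simple_formula
    (Δ : H →ₐ[ℝ] (H ⊗[ℝ] H)) (hΔ : IsFBCoproduct Δ)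
    (S : H →ₗ[ℝ] H) (hS : IsAntipode Δ S) :
    ∀ η : Word, η ≠ [] →
      evalS (-ferfera) (S (aw η)) =
        ((-1 : ℝ) ^ (η.length - 1)) * evalS (-ferfera) (thetaHatWord η (aw [])) := by
  intro η hne
  have h := final_key Δ hΔ S hS (wt2 kapW η) η rfl
  rw [h, rrF]
  cases η with
  | nil => exact absurd rfl hne
  | cons i v =>
      simp only [List.length_cons, Nat.add_sub_cancel]
      rw [pow_succ]
      ring
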